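/- Let U denote the identity on [0,1], tₙ → 0 with tₙ ≠ 0, and hₙ bounded functions on [0,1] converging uniformly to a continuous h with h(0)=h(1)=0, such that each Fₙ = U + tₙhₙ is a distribution function on [0,1] with Fₙ(0)=0. Then sup_{x∈[0,1]} | (Fₙ⁻(x) − x)/tₙ + h(x) | → 0 as n → ∞, where Fₙ⁻ denotes the generalized inverse. -/

import Mathlib

open Set Filter

/-- Structural facts about the generalized inverse at `p ∈ (0,1]`. -/
lemma gi_inf_facts (tn : ℝ) (hn : ℝ → ℝ)
    (mono : ∀ x ∈ Icc (0:ℝ) 1, ∀ y ∈ Icc (0:ℝ) 1, x ≤ y → x + tn * hn x ≤ y + tn * hn y)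
    (rc : ∀ x ∈ Ico (0:ℝ) 1, ContinuousWithinAt (fun y => y + tn * hn y) (Ici x) x)
    (F1 : (1:ℝ) + tn * hn 1 = 1)
    (p : ℝ) (hp : p ∈ Ioc (0:ℝ) 1) :
    sInf {x ∈ Icc (0:ℝ) 1 | p ≤ x + tn * hn x} ∈ Icc (0:ℝ) 1 ∧
    p ≤ sInf {x ∈ Icc (0:ℝ) 1 | p ≤ x + tn * hn x}
        + tn * hn (sInf {x ∈ Icc (0:ℝ) 1 | p ≤ x + tn * hn x}) ∧
    ∀ x ∈ Icc (0:ℝ) 1, x < sInf {x ∈ Icc (0:ℝ) 1 | p ≤ x + tn * hn x} →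
      x + tn * hn x < p := by
  set S := {x ∈ Icc (0:ℝ) 1 | p ≤ x + tn * hn x} with hS
  have h1S : (1:ℝ) ∈ S := by
    refine ⟨⟨zero_le_one, le_refl 1⟩, ?_⟩
    rw [F1]; exact hp.2
  have hne : S.Nonempty := ⟨1, h1S⟩
  have hbdd : BddBelow S := ⟨0, fun x hx => hx.1.1⟩
  have hx0 : 0 ≤ sInf S := le_csInf hne (fun x hx => hx.1.1)
  have hx1 : sInf S ≤ 1 := csInf_le hbdd h1S
  refine ⟨⟨hx0, hx1⟩, ?_, ?_⟩
  · -- p ≤ F (sInf S), using right-continuity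
    rcases eq_or_lt_of_le hx1 with heq | hlt
    · rw [heq, F1]; exact hp.2
    · have hcw := rc (sInf S) ⟨hx0, hlt⟩
      have htend : Tendsto (fun y => y + tn * hn y) (nhdsWithin (sInf S) (Ioi (sInf S)))
          (nhds (sInf S + tn * hn (sInf S))) :=
        hcw.tendsto.mono_left (nhdsWithin_mono _ Ioi_subset_Ici_self)
      refine ge_of_tendsto htend ?_
      filter_upwards [Ioo_mem_nhdsGT_of_mem (⟨le_refl _, hlt⟩ : sInf S ∈ Ico (sInf S) 1)]
        with y hy
      obtain ⟨s, hsS, hsy⟩ := exists_lt_of_csInf_lt hne hy.1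
      calc p ≤ s + tn * hn s := hsS.2
        _ ≤ y + tn * hn y :=
          mono s hsS.1 y ⟨le_trans hx0 (le_of_lt hy.1), le_of_lt hy.2⟩
            (le_of_lt hsy)
  · intro x hx hxlt
    by_contra hc
    push_neg at hc
    exact absurd (csInf_le hbdd ⟨hx, hc⟩) (not_le.2 hxlt)

/-- Quantitative estimate for `p ∈ (0,1]`. -/
lemma gi_quant_pos (tn : ℝ) (hn hl : ℝ → ℝ) (B e ε₀ δ : ℝ) (xs p : ℝ)
    (htn : tn ≠ 0) (he0 : 0 ≤ e) (hε₀ : 0 < ε₀)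
    (he : ∀ x ∈ Icc (0:ℝ) 1, |hn x - hl x| ≤ e)
    (hδ : ∀ a ∈ Icc (0:ℝ) 1, ∀ b ∈ Icc (0:ℝ) 1, |a - b| ≤ δ → |hl a - hl b| ≤ ε₀)
    (hl0 : hl 0 = 0)
    (hB : ∀ x ∈ Icc (0:ℝ) 1, |tn * hn x| ≤ B)
    (hsmall : B + |tn| * ε₀ ≤ δ)
    (hp : p ∈ Ioc (0:ℝ) 1) (hx : xs ∈ Icc (0:ℝ) 1)
    (hup : p ≤ xs + tn * hn xs)
    (hlow : ∀ x ∈ Icc (0:ℝ) 1, x < xs → x + tn * hn x < p) :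
    |(xs - p) / tn + hl p| ≤ 2 * ε₀ + e := by
  have htnpos : 0 < |tn| := abs_pos.2 htn
  have hB0 : 0 ≤ B := le_trans (abs_nonneg _) (hB 0 ⟨le_refl 0, zero_le_one⟩)
  have hBδ : B ≤ δ := by nlinarith
  have hpIcc : p ∈ Icc (0:ℝ) 1 := ⟨le_of_lt hp.1, hp.2⟩
  -- |xs - p| ≤ B
  have habsB := abs_le.1 (hB xs hx)
  have hlo1 : -B ≤ xs - p := by linarith [hup, habsB.1]
  have hhi1 : xs - p ≤ B := by
    by_contra hc
    push_neg at hc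
    have hxpB : p + B < xs := by linarith
    have hpB1 : p + B ≤ 1 := le_trans (le_of_lt hxpB) hx.2
    have hpBIcc : p + B ∈ Icc (0:ℝ) 1 := ⟨by linarith [hp.1], hpB1⟩
    have h1 := hlow (p + B) hpBIcc hxpB
    have h2 := abs_le.1 (hB (p + B) hpBIcc)
    linarith [h2.1]
  have habsxp : |xs - p| ≤ B := abs_le.2 ⟨hlo1, hhi1⟩
  -- main estimate on E = (xs - p) + tn * hl p
  have hElo : -(|tn| * (2 * ε₀ + e)) ≤ (xs - p) + tn * hl p := by
    have h1 : |hl p - hl xs| ≤ ε₀ := hδ p hpIcc xs hx (by rw [abs_sub_comm]; exact habsxp.trans hBδ)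
    have h2 : |hn xs - hl xs| ≤ e := he xs hx
    have key : |tn * (hl p - hn xs)| ≤ |tn| * (ε₀ + e) := by
      rw [abs_mul]
      refine mul_le_mul_of_nonneg_left ?_ (abs_nonneg _)
      calc |hl p - hn xs| = |(hl p - hl xs) - (hn xs - hl xs)| := by ring_nf
        _ ≤ |hl p - hl xs| + |hn xs - hl xs| := abs_sub _ _
        _ ≤ ε₀ + e := add_le_add h1 h2
    have hk := (abs_le.1 key).1
    nlinarith [htnpos.le]
  have hEhi : (xs - p) + tn * hl p ≤ |tn| * (2 * ε₀ + e) := by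
    by_cases hcase : xs ≤ |tn| * ε₀
    · -- small xs: p ≤ xs + B is small
      have hpsmall : p ≤ |tn| * ε₀ + B := by linarith [hup, habsB.2]
      have hhp : |hl p| ≤ ε₀ := by
        have := hδ p hpIcc 0 ⟨le_refl 0, zero_le_one⟩ (by
          rw [sub_zero, abs_of_nonneg (le_of_lt hp.1)]; linarith)
        rwa [hl0, sub_zero] at this
      have hth : tn * hl p ≤ |tn| * ε₀ := by
        calc tn * hl p ≤ |tn * hl p| := le_abs_self _
          _ = |tn| * |hl p| := abs_mul _ _
          _ ≤ |tn| * ε₀ := mul_le_mul_of_nonneg_left hhp (abs_nonneg _)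
      nlinarith [hp.1.le, htnpos.le]
    · push_neg at hcase
      set y := xs - |tn| * ε₀ with hy
      have hηpos : 0 < |tn| * ε₀ := by positivity
      have hyIcc : y ∈ Icc (0:ℝ) 1 := ⟨by simp only [hy]; linarith,
        by simp only [hy]; linarith [hx.2]⟩
      have hyxs : y < xs := by simp only [hy]; linarith
      have hlowy := hlow y hyIcc hyxs
      have h1 : |hl p - hl y| ≤ ε₀ := by
        refine hδ p hpIcc y hyIcc ?_
        have hpy : |p - y| ≤ |p - xs| + |xs - y| := by
          calc |p - y| = |(p - xs) + (xs - y)| := by ring_nf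
            _ ≤ |p - xs| + |xs - y| := abs_add_le _ _
        have hxy : |xs - y| = |tn| * ε₀ := by
          simp only [hy, sub_sub_cancel]
          exact abs_of_nonneg (le_of_lt hηpos)
        rw [abs_sub_comm] at habsxp
        linarith
      have h2 : |hn y - hl y| ≤ e := he y hyIcc
      have key : tn * (hl p - hn y) ≤ |tn| * (ε₀ + e) := by
        calc tn * (hl p - hn y) ≤ |tn * (hl p - hn y)| := le_abs_self _
          _ = |tn| * |hl p - hn y| := abs_mul _ _
          _ ≤ |tn| * (ε₀ + e) := by
            refine mul_le_mul_of_nonneg_left ?_ (abs_nonneg _)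
            calc |hl p - hn y| = |(hl p - hl y) - (hn y - hl y)| := by ring_nf
              _ ≤ |hl p - hl y| + |hn y - hl y| := abs_sub _ _
              _ ≤ ε₀ + e := add_le_add h1 h2
      -- from hlowy : y + tn * hn y < p
      simp only [hy] at hlowy
      nlinarith
  have hE : |(xs - p) + tn * hl p| ≤ |tn| * (2 * ε₀ + e) := abs_le.2 ⟨hElo, hEhi⟩
  have heq : (xs - p) / tn + hl p = ((xs - p) + tn * hl p) / tn := by
    field_simp
  rw [heq, abs_div, div_le_iff₀ htnpos]
  calc |xs - p + tn * hl p| ≤ |tn| * (2 * ε₀ + e) := hE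
    _ = (2 * ε₀ + e) * |tn| := mul_comm _ _

/-- Quantitative estimate for `p = 0`. -/
lemma gi_quant_zero (tn : ℝ) (hn hl : ℝ → ℝ) (B e ε₀ δ : ℝ) (xs : ℝ)
    (htn : tn ≠ 0) (he0 : 0 ≤ e) (hε₀ : 0 < ε₀)
    (he : ∀ x ∈ Icc (0:ℝ) 1, |hn x - hl x| ≤ e)
    (hδ : ∀ a ∈ Icc (0:ℝ) 1, ∀ b ∈ Icc (0:ℝ) 1, |a - b| ≤ δ → |hl a - hl b| ≤ ε₀)
    (hl0 : hl 0 = 0)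
    (hB : ∀ x ∈ Icc (0:ℝ) 1, |tn * hn x| ≤ B)
    (hsmall : B + |tn| * ε₀ ≤ δ)
    (F0 : (0:ℝ) + tn * hn 0 = 0)
    (hxs : xs = sSup {x ∈ Icc (0:ℝ) 1 | x + tn * hn x = 0}) :
    |(xs - 0) / tn + hl 0| ≤ 2 * ε₀ + e := by
  have htnpos : 0 < |tn| := abs_pos.2 htn
  have hB0 : 0 ≤ B := le_trans (abs_nonneg _) (hB 0 ⟨le_refl 0, zero_le_one⟩)
  have hBδ : B ≤ δ := by nlinarith
  set S := {x ∈ Icc (0:ℝ) 1 | x + tn * hn x = 0} with hS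
  have h0S : (0:ℝ) ∈ S := ⟨⟨le_refl 0, zero_le_one⟩, F0⟩
  have hbddS : BddAbove S := ⟨1, fun x hx => hx.1.2⟩
  have hxs0 : 0 ≤ xs := hxs ▸ le_csSup hbddS h0S
  have hxsle : xs ≤ |tn| * (ε₀ + e) := by
    rw [hxs]
    refine csSup_le ⟨0, h0S⟩ (fun s hs => ?_)
    have hseq : s = -(tn * hn s) := by linarith [hs.2]
    have h5 : |s| = |tn * hn s| := by
      conv_lhs => rw [hseq]
      exact abs_neg _
    have hsB : |s| ≤ B := by rw [h5]; exact hB s hs.1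
    have hhls : |hl s| ≤ ε₀ := by
      have := hδ s hs.1 0 ⟨le_refl 0, zero_le_one⟩ (by rw [sub_zero]; linarith)
      rwa [hl0, sub_zero] at this
    have hhns : |hn s| ≤ ε₀ + e := by
      have h2 := he s hs.1
      calc |hn s| = |(hn s - hl s) + hl s| := by ring_nf
        _ ≤ |hn s - hl s| + |hl s| := abs_add_le _ _
        _ ≤ e + ε₀ := add_le_add h2 hhls
        _ = ε₀ + e := add_comm _ _
    calc s ≤ |s| := le_abs_self s
      _ = |tn * hn s| := h5
      _ = |tn| * |hn s| := abs_mul _ _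
      _ ≤ |tn| * (ε₀ + e) := mul_le_mul_of_nonneg_left hhns (abs_nonneg _)
  rw [hl0, sub_zero, add_zero, abs_div, div_le_iff₀ htnpos, abs_of_nonneg hxs0]
  nlinarith

/-- Hadamard differentiability of `F ↦ F⁻` at the identity, tangentially to
continuous functions vanishing at `0` and `1`: with `Fₙ = id + tₙ hₙ` distribution functions
on `[0,1]`, `sup_{x ∈ [0,1]} |(Fₙ⁻(x) − x)/tₙ + h(x)| → 0`. -/
theorem generalized_inverse_hadamard_at_identity
    (t : ℕ → ℝ) (h : ℕ → ℝ → ℝ) (hlim : ℝ → ℝ)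
    (ht0 : ∀ n, t n ≠ 0) (htt : Tendsto t atTop (nhds 0))
    (hbdd : ∀ n, ∃ M, ∀ x ∈ Icc (0:ℝ) 1, |h n x| ≤ M)
    (hunif : TendstoUniformlyOn h hlim atTop (Icc 0 1))
    (hcont : ContinuousOn hlim (Icc 0 1)) (hl0 : hlim 0 = 0) (hl1 : hlim 1 = 0)
    (hdf : ∀ n,
      (∀ x ∈ Icc (0:ℝ) 1, ∀ y ∈ Icc (0:ℝ) 1, x ≤ y → x + t n * h n x ≤ y + t n * h n y) ∧
      (∀ x ∈ Ico (0:ℝ) 1, ContinuousWithinAt (fun y => y + t n * h n y) (Ici x) x) ∧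
      (∀ x ∈ Icc (0:ℝ) 1, x + t n * h n x ∈ Icc (0:ℝ) 1) ∧
      ((0:ℝ) + t n * h n 0 = 0) ∧ ((1:ℝ) + t n * h n 1 = 1))
    (Finv : ℕ → ℝ → ℝ)
    (hFinv : ∀ n, ∀ p ∈ Ioc (0:ℝ) 1,
      Finv n p = sInf {x ∈ Icc (0:ℝ) 1 | p ≤ x + t n * h n x})
    (hFinv0 : ∀ n, Finv n 0 = sSup {x ∈ Icc (0:ℝ) 1 | x + t n * h n x = 0}) :
    Tendsto (fun n => ⨆ x : Icc (0:ℝ) 1, |(Finv n x.1 - x.1) / t n + hlim x.1|)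
      atTop (nhds 0) := by
  -- bound for hlim
  obtain ⟨K₀, hK₀⟩ := (isCompact_Icc (a := (0:ℝ)) (b := 1)).exists_bound_of_continuousOn hcont
  set K := max K₀ 0 with hK
  have hKb : ∀ x ∈ Icc (0:ℝ) 1, |hlim x| ≤ K := fun x hx =>
    le_trans (hK₀ x hx) (le_max_left _ _)
  have hK0 : 0 ≤ K := le_max_right _ _
  -- uniform continuity of hlim
  have hUC := (isCompact_Icc (a := (0:ℝ)) (b := 1)).uniformContinuousOn_of_continuous hcont
  rw [Metric.tendsto_atTop]
  intro ε hε
  have hε4 : 0 < ε / 4 := by linarith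
  obtain ⟨δ, hδpos, hδ⟩ := Metric.uniformContinuousOn_iff.1 hUC (ε / 4) hε4
  have hδ' : ∀ a ∈ Icc (0:ℝ) 1, ∀ b ∈ Icc (0:ℝ) 1, |a - b| ≤ δ / 2 → |hlim a - hlim b| ≤ ε / 4 := by
    intro a ha b hb hab
    have : dist a b < δ := by
      rw [Real.dist_eq]; linarith
    exact le_of_lt (hδ a ha b hb this)
  -- eventual bounds
  have hev1 : ∀ᶠ n in atTop, ∀ x ∈ Icc (0:ℝ) 1, |h n x - hlim x| ≤ ε / 4 := by
    filter_upwards [Metric.tendstoUniformlyOn_iff.1 hunif (ε / 4) hε4] with n hn x hx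
    have := hn x hx
    rw [Real.dist_eq, abs_sub_comm] at this
    exact le_of_lt this
  have hev2 : ∀ᶠ n in atTop, |t n| * (K + ε / 4 + ε / 4) < δ / 2 := by
    have habs : Tendsto (fun n => |t n| * (K + ε / 4 + ε / 4)) atTop (nhds 0) := by
      have h1 : Tendsto (fun n => |t n|) atTop (nhds 0) := by
        have := htt.abs
        simpa using this
      have := h1.mul_const (K + ε / 4 + ε / 4)
      simpa using this
    have hpos : (0:ℝ) < δ / 2 := by linarith
    exact habs.eventually_lt_const hpos
  obtain ⟨N, hN⟩ := eventually_atTop.1 (hev1.and hev2)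
  refine ⟨N, fun n hn => ?_⟩
  obtain ⟨hen, htn⟩ := hN n hn
  obtain ⟨mono, rc, maps, F0, F1⟩ := hdf n
  -- per-point bound
  have hBdef : ∀ x ∈ Icc (0:ℝ) 1, |t n * h n x| ≤ |t n| * (K + ε / 4) := by
    intro x hx
    rw [abs_mul]
    refine mul_le_mul_of_nonneg_left ?_ (abs_nonneg _)
    have h1 := hen x hx
    have h2 := hKb x hx
    calc |h n x| = |(h n x - hlim x) + hlim x| := by ring_nf
      _ ≤ |h n x - hlim x| + |hlim x| := abs_add_le _ _
      _ ≤ ε / 4 + K := add_le_add h1 h2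
      _ = K + ε / 4 := add_comm _ _
  have hsmall : |t n| * (K + ε / 4) + |t n| * (ε / 4) ≤ δ / 2 := by nlinarith [le_of_lt htn]
  have hpt : ∀ p ∈ Icc (0:ℝ) 1, |(Finv n p - p) / t n + hlim p| ≤ 2 * (ε / 4) + ε / 4 := by
    intro p hp
    rcases eq_or_lt_of_le hp.1 with hp0 | hppos
    · rw [← hp0]
      exact gi_quant_zero (t n) (h n) hlim (|t n| * (K + ε / 4)) (ε / 4) (ε / 4) (δ / 2)
        (Finv n 0) (ht0 n) (le_of_lt hε4) hε4 hen hδ' hl0 hBdef hsmall F0 (hFinv0 n)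
    · have hpIoc : p ∈ Ioc (0:ℝ) 1 := ⟨hppos, hp.2⟩
      obtain ⟨hxIcc, hup, hlow⟩ := gi_inf_facts (t n) (h n) mono rc F1 p hpIoc
      rw [hFinv n p hpIoc]
      exact gi_quant_pos (t n) (h n) hlim (|t n| * (K + ε / 4)) (ε / 4) (ε / 4) (δ / 2)
        _ p (ht0 n) (le_of_lt hε4) hε4 hen hδ' hl0 hBdef hsmall hpIoc hxIcc hup hlow
  -- conclude
  have hsupnn : 0 ≤ ⨆ x : Icc (0:ℝ) 1, |(Finv n x.1 - x.1) / t n + hlim x.1| :=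
    Real.iSup_nonneg (fun x => abs_nonneg _)
  have hsuple : (⨆ x : Icc (0:ℝ) 1, |(Finv n x.1 - x.1) / t n + hlim x.1|) ≤ 3 * ε / 4 := by
    refine Real.iSup_le (fun x => ?_) (by linarith)
    have := hpt x.1 x.2
    linarith
  rw [Real.dist_eq, sub_zero, abs_of_nonneg hsupnn]
  linarith
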